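/- The intersection of the polytope P_4 ⊆ R^4 with the hyperplane λ1 = 1 is the convex hull of (1,1,1,1), (1,1/2,1/2,1), (1,1/2,1,1/2), (1,1,1/2,1/2); that is, its projection to the last three coordinates equals the three-qubit W-polytope, the convex hull of (1,1,1), (1/2,1/2,1), (1/2,1,1/2), (1,1/2,1/2). -/

import Mathlib

theorem P4_slice_lambda1_eq_one :
    ({x : Fin 4 → ℝ |
        x ∈ convexHull ℝ
          ({![(1:ℝ),1,1,1], ![1/2,1/2,1,1], ![1/2,1,1/2,1], ![1/2,1,1,1/2],
             ![1,1/2,1/2,1], ![1,1/2,1,1/2], ![1,1,1/2,1/2], ![1/2,1/2,1/2,1/2]} :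
            Set (Fin 4 → ℝ)) ∧ x 0 = 1} =
      convexHull ℝ
        ({![(1:ℝ),1,1,1], ![1,1/2,1/2,1], ![1,1/2,1,1/2], ![1,1,1/2,1/2]} :
          Set (Fin 4 → ℝ))) ∧
    ((fun x : Fin 4 → ℝ => ![x 1, x 2, x 3]) ''
        {x : Fin 4 → ℝ |
          x ∈ convexHull ℝ
            ({![(1:ℝ),1,1,1], ![1/2,1/2,1,1], ![1/2,1,1/2,1], ![1/2,1,1,1/2],
               ![1,1/2,1/2,1], ![1,1/2,1,1/2], ![1,1,1/2,1/2], ![1/2,1/2,1/2,1/2]} :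
              Set (Fin 4 → ℝ)) ∧ x 0 = 1} =
      convexHull ℝ
        ({![(1:ℝ),1,1], ![1/2,1/2,1], ![1/2,1,1/2], ![1,1/2,1/2]} : Set (Fin 3 → ℝ))) := by
  set S8 : Set (Fin 4 → ℝ) :=
    ({![(1:ℝ),1,1,1], ![1/2,1/2,1,1], ![1/2,1,1/2,1], ![1/2,1,1,1/2],
       ![1,1/2,1/2,1], ![1,1/2,1,1/2], ![1,1,1/2,1/2], ![1/2,1/2,1/2,1/2]} :
      Set (Fin 4 → ℝ)) with hS8
  set S4 : Set (Fin 4 → ℝ) :=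
    ({![(1:ℝ),1,1,1], ![1,1/2,1/2,1], ![1,1/2,1,1/2], ![1,1,1/2,1/2]} :
      Set (Fin 4 → ℝ)) with hS4
  have hsub : S4 ⊆ S8 := by
    intro y hy
    simp only [hS4, hS8, Set.mem_insert_iff, Set.mem_singleton_iff] at hy ⊢
    tauto
  have hA : ∀ y ∈ S8, y 0 ≤ 1 ∧ (y 0 = 1 → y ∈ S4) := by
    intro y hy
    simp only [hS8, Set.mem_insert_iff, Set.mem_singleton_iff] at hy
    rcases hy with rfl|rfl|rfl|rfl|rfl|rfl|rfl|rfl <;>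
      constructor <;>
      simp only [hS4, Matrix.cons_val_zero, Set.mem_insert_iff, Set.mem_singleton_iff] <;>
      norm_num
  have hmain : {x : Fin 4 → ℝ | x ∈ convexHull ℝ S8 ∧ x 0 = 1} = convexHull ℝ S4 := by
    apply Set.Subset.antisymm
    · rintro x ⟨hx, hx0⟩
      rw [mem_convexHull_iff_exists_fintype] at hx
      obtain ⟨ι, hι, w, z, hw, hw1, hz, hxz⟩ := hx
      have hx0' : ∑ i, w i * z i 0 = 1 := by
        rw [← hx0, ← hxz]; simp [Finset.sum_apply]
      have hzero : ∀ i ∈ Finset.univ, w i * (1 - z i 0) = 0 := by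
        rw [← Finset.sum_eq_zero_iff_of_nonneg]
        · have : ∑ i, w i * (1 - z i 0) = (∑ i, w i) - ∑ i, w i * z i 0 := by
            rw [← Finset.sum_sub_distrib]
            congr 1; funext i; ring
          rw [this, hw1, hx0']; ring
        · intro i _
          exact mul_nonneg (hw i) (by linarith [(hA (z i) (hz i)).1])
      exact mem_convexHull_of_exists_fintype w
        (fun i => if h : z i 0 = 1 then z i else ![(1:ℝ),1,1,1]) hw hw1
        (by
          intro i
          by_cases h : z i 0 = 1
          · simpa [h] using (hA (z i) (hz i)).2 h
          · simp only [h, dif_neg, not_false_iff]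
            simp [hS4])
        (by
          rw [← hxz]
          apply Finset.sum_congr rfl
          intro i _
          by_cases h : z i 0 = 1
          · simp [h]
          · have := hzero i (Finset.mem_univ i)
            rcases mul_eq_zero.mp this with h0 | h0
            · simp [h0]
            · exact absurd (by linarith) h)
    · intro x hx
      refine ⟨convexHull_mono hsub hx, ?_⟩
      have hconv : Convex ℝ {y : Fin 4 → ℝ | y 0 = 1} := by
        intro a ha b hb s t hs ht hst
        simp only [Set.mem_setOf_eq] at ha hb ⊢
        simp [Pi.add_apply, Pi.smul_apply, ha, hb]
        linarith
      have : convexHull ℝ S4 ⊆ {y : Fin 4 → ℝ | y 0 = 1} := by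
        apply convexHull_min _ hconv
        intro y hy
        simp only [hS4, Set.mem_insert_iff, Set.mem_singleton_iff] at hy
        rcases hy with rfl|rfl|rfl|rfl <;> simp
      exact this hx
  refine ⟨hmain, ?_⟩
  rw [hmain]
  have hlin : IsLinearMap ℝ (fun x : Fin 4 → ℝ => ![x 1, x 2, x 3]) := by
    constructor
    · intro a b; funext i; fin_cases i <;> simp
    · intro c a; funext i; fin_cases i <;> simp
  rw [hlin.image_convexHull]
  congr 1
  simp only [hS4, Set.image_insert_eq, Set.image_singleton]
  simp [Matrix.vecHead, Matrix.vecTail]
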